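/- arXiv:math/0509678 — 3 statements merged into one kernel-verified Lean document; each statement's English description precedes it below -/
import Mathlib

section
/- For a, b ∈ IS_n, the sandwich semigroups (IS_n, *_a) and (IS_n, *_b) are isomorphic as semigroups if and only if rank(a) = rank(b). -/
open Equiv

/-- `IS n` : the symmetric inverse semigroup on `{1,…,n}`, modeled as partial
equivalences of `Fin n`.  Composition is left-to-right: `(x.trans y) t = y (x t)`. -/
abbrev IS (n : ℕ) := PEquiv (Fin n) (Fin n)

/-- The domain of a partial injective transformation. -/
def sdom {n : ℕ} (x : IS n) : Set (Fin n) := {a | (x a).isSome}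

/-- The image of a partial injective transformation. -/
def sim {n : ℕ} (x : IS n) : Set (Fin n) := {b | (x.symm b).isSome}

/-- The rank of a partial injective transformation: the cardinality of its image. -/
noncomputable def srank {n : ℕ} (x : IS n) : ℕ := Nat.card (sim x)

/-- The set `A = {1,…,k}` inside `Fin n`, i.e. the first `k` elements. -/
def SetA (n k : ℕ) : Set (Fin n) := {i | (i : ℕ) < k}

/-- The idempotent `e` acting identically on `A`, with `dom e = im e = A`. -/
def sandE (n k : ℕ) : IS n where
  toFun i := if (i : ℕ) < k then some i else none
  invFun i := if (i : ℕ) < k then some i else none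
  inv a b := by
    split_ifs with h1 h2 <;>
      simp_all [Option.mem_def, eq_comm] <;> rintro rfl <;> omega

/-- The sandwich multiplication `x * y = x e y` (left-to-right composition). -/
def smul (n k : ℕ) (x y : IS n) : IS n := (x.trans (sandE n k)).trans y

/-- The sandwich multiplication with an arbitrary sandwich element `a`. -/
def smulBy {n : ℕ} (a x y : IS n) : IS n := (x.trans a).trans y

section Aux
variable {n : ℕ}

instance : Finite (IS n) :=
  Finite.of_injective (fun f => (f : Fin n → Option (Fin n))) DFunLike.coe_injective

lemma ptrans_apply (p q : IS n) (t : Fin n) : (p.trans q) t = (p t).bind q := rfl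

lemma psymm_trans_apply (p q : IS n) (t : Fin n) :
    (p.trans q).symm t = (q.symm t).bind p.symm := rfl

lemma sandE_apply (k : ℕ) (t : Fin n) :
    sandE n k t = if (t : ℕ) < k then some t else none := rfl

lemma srank_trans_le_right (p q : IS n) : srank (p.trans q) ≤ srank q := by
  apply Nat.card_mono (Set.toFinite _)
  intro c hc
  simp only [sim, Set.mem_setOf_eq, psymm_trans_apply] at *
  cases h : q.symm c with
  | none => rw [h] at hc; simp at hc
  | some m => simp

lemma srank_trans_le_left (p q : IS n) : srank (p.trans q) ≤ srank p := by
  have key : ∀ c : sim (p.trans q), ∃ m, q.symm (c : Fin n) = some m ∧ (p.symm m).isSome := by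
    rintro ⟨c, hc⟩
    simp only [sim, Set.mem_setOf_eq, psymm_trans_apply] at hc
    cases h : q.symm c with
    | none => rw [h] at hc; simp at hc
    | some m => exact ⟨m, rfl, by rw [h] at hc; simpa using hc⟩
  choose m hm hm2 using key
  apply Nat.card_le_card_of_injective (fun c => (⟨m c, hm2 c⟩ : sim p))
  rintro c1 c2 h
  have h' : m c1 = m c2 := congrArg Subtype.val h
  have e1 : q (m c1) = some (c1 : Fin n) := q.eq_some_iff.1 (hm c1)
  have e2 : q (m c2) = some (c2 : Fin n) := q.eq_some_iff.1 (hm c2)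
  rw [h'] at e1
  apply Subtype.ext
  rw [e1] at e2
  exact (Option.some.inj e2)

lemma srank_smulBy_le (a x y : IS n) : srank (smulBy a x y) ≤ srank a :=
  le_trans (srank_trans_le_left (x.trans a) y) (srank_trans_le_right x a)

noncomputable def domEquivIm (x : IS n) : sdom x ≃ sim x where
  toFun t := ⟨(x t).get t.2, by
    have hx : x (t : Fin n) = some ((x (t : Fin n)).get t.2) := (Option.some_get t.2).symm
    show (x.symm _).isSome
    rw [x.eq_some_iff.2 hx]; rfl⟩
  invFun b := ⟨(x.symm (b : Fin n)).get b.2, by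
    have hx : x.symm (b : Fin n) = some ((x.symm (b : Fin n)).get b.2) := (Option.some_get b.2).symm
    show (x _).isSome
    rw [x.eq_some_iff.1 hx]; rfl⟩
  left_inv := by
    rintro ⟨t, ht⟩
    apply Subtype.ext
    have hx : x t = some ((x t).get ht) := (Option.some_get ht).symm
    have := x.eq_some_iff.2 hx
    simp [this]
  right_inv := by
    rintro ⟨b, hb⟩
    apply Subtype.ext
    have hx : x.symm b = some ((x.symm b).get hb) := (Option.some_get hb).symm
    have := x.eq_some_iff.1 hx
    simp [this]

lemma card_sdom (x : IS n) : Nat.card (sdom x) = srank x := Nat.card_congr (domEquivIm x)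

lemma srank_le (x : IS n) : srank x ≤ n := by
  rw [srank]
  have := Nat.card_le_card_of_injective (Subtype.val : sim x → Fin n) Subtype.val_injective
  simpa using this

lemma perm_cancel (g : Perm (Fin n)) :
    g.toPEquiv.trans g.symm.toPEquiv = PEquiv.refl (Fin n) := by
  rw [← Equiv.toPEquiv_trans, Equiv.self_trans_symm, Equiv.toPEquiv_refl]

lemma perm_cancel' (g : Perm (Fin n)) :
    g.symm.toPEquiv.trans g.toPEquiv = PEquiv.refl (Fin n) := by
  rw [← Equiv.toPEquiv_trans, Equiv.symm_trans_self, Equiv.toPEquiv_refl]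

lemma cancel₁ (g : Perm (Fin n)) (x : IS n) :
    g.toPEquiv.trans (g.symm.toPEquiv.trans x) = x := by
  rw [← PEquiv.trans_assoc, perm_cancel, PEquiv.refl_trans]

lemma cancel₂ (g : Perm (Fin n)) (x : IS n) :
    g.symm.toPEquiv.trans (g.toPEquiv.trans x) = x := by
  rw [← PEquiv.trans_assoc, perm_cancel', PEquiv.refl_trans]

lemma sandE_trans {j k : ℕ} (h : j ≤ k) :
    (sandE n j).trans (sandE n k) = sandE n j := by
  apply PEquiv.ext
  intro t
  rw [ptrans_apply, sandE_apply]
  split_ifs with h1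
  · simp [sandE_apply, lt_of_lt_of_le h1 h]
  · rfl

lemma sandE_trans_le {j k : ℕ} (h : j ≤ k) (x : IS n) :
    (sandE n j).trans ((sandE n k).trans x) = (sandE n j).trans x := by
  rw [← PEquiv.trans_assoc, sandE_trans h]

instance instDecSetA {n r : ℕ} : DecidablePred (· ∈ SetA n r) :=
  fun i => inferInstanceAs (Decidable ((i : ℕ) < r))

instance instDecSdom {x : IS n} : DecidablePred (· ∈ sdom x) :=
  fun t => inferInstanceAs (Decidable ((x t).isSome = true))

instance instDecSim {x : IS n} : DecidablePred (· ∈ sim x) :=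
  fun t => inferInstanceAs (Decidable ((x.symm t).isSome = true))

lemma exists_perm_ext (S : Set (Fin n)) [DecidablePred (· ∈ S)] {r : ℕ}
    (e' : S ≃ ↥(SetA n r)) :
    ∃ P : Perm (Fin n), (∀ (s : Fin n) (hs : s ∈ S), P s = ↑(e' ⟨s, hs⟩)) ∧
      (∀ s ∉ S, P s ∉ SetA n r) := by
  have hc : Fintype.card {x // ¬ x ∈ S} = Fintype.card {x // ¬ x ∈ SetA n r} := by
    rw [Fintype.card_subtype_compl, Fintype.card_subtype_compl]
    congr 1
    exact Fintype.card_congr e'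
  let ec : {x // ¬ x ∈ S} ≃ {x // ¬ x ∈ SetA n r} := Fintype.equivOfCardEq hc
  refine ⟨(Equiv.sumCompl (· ∈ S)).symm.trans ((e'.sumCongr ec).trans
      (Equiv.sumCompl (· ∈ SetA n r))), ?_, ?_⟩
  · intro s hs
    simp [Equiv.sumCompl_symm_apply_of_pos hs]
  · intro s hs
    simp only [Equiv.trans_apply, Equiv.sumCompl_symm_apply_of_neg hs,
      Equiv.sumCongr_apply, Sum.map_inr, Equiv.sumCompl_apply_inr]
    exact (ec ⟨s, hs⟩).2

lemma normal_form (a : IS n) : ∃ p q : Perm (Fin n),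
    a = (p.toPEquiv.trans (sandE n (srank a))).trans q.toPEquiv := by
  set r := srank a with hr
  have hrn : r ≤ n := srank_le a
  have hds : Fintype.card (sdom a) = r := by
    rw [← Nat.card_eq_fintype_card, card_sdom]
  let eA : Fin r ≃ ↥(SetA n r) :=
    { toFun := fun i => ⟨⟨i.1, lt_of_lt_of_le i.2 hrn⟩, i.2⟩
      invFun := fun j => ⟨(j : Fin n).1, j.2⟩
      left_inv := fun i => rfl
      right_inv := fun j => rfl }
  let eD : sdom a ≃ ↥(SetA n r) := (Fintype.equivFinOfCardEq hds).trans eA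
  let eI : sim a ≃ ↥(SetA n r) := (domEquivIm a).symm.trans eD
  obtain ⟨P, hP1, hP2⟩ := exists_perm_ext (sdom a) eD
  obtain ⟨Q, hQ1, hQ2⟩ := exists_perm_ext (sim a) eI
  refine ⟨P, Q.symm, ?_⟩
  apply PEquiv.ext
  intro t
  rw [ptrans_apply, ptrans_apply, Equiv.toPEquiv_apply, Option.bind_some, sandE_apply]
  by_cases ht : t ∈ sdom a
  · have h1 : P t = ↑(eD ⟨t, ht⟩) := hP1 t ht
    have hlt : ((P t : Fin n) : ℕ) < r := by rw [h1]; exact (eD ⟨t, ht⟩).2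
    set b : sim a := domEquivIm a ⟨t, ht⟩ with hb
    have hQb : Q (b : Fin n) = ↑(eI b) := hQ1 (b : Fin n) b.2
    have heq : (eI b : Fin n) = (eD ⟨t, ht⟩ : Fin n) := by
      have : eI b = eD ⟨t, ht⟩ := by
        show eD ((domEquivIm a).symm b) = eD ⟨t, ht⟩
        rw [hb, Equiv.symm_apply_apply]
      rw [this]
    have hsy : Q.symm (P t) = (b : Fin n) := by
      rw [h1, ← heq, ← hQb, Equiv.symm_apply_apply]
    rw [if_pos hlt, Option.bind_some, Equiv.toPEquiv_apply, hsy]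
    show a t = some ((a t).get ht)
    exact (Option.some_get ht).symm
  · have h2 : P t ∉ SetA n r := hP2 t ht
    have h2' : ¬ ((P t : Fin n) : ℕ) < r := h2
    rw [if_neg h2', Option.bind_none]
    show a t = none
    exact Option.not_isSome_iff_eq_none.1 ht

lemma smulBy_factor {a z : IS n} (h : srank z ≤ srank a) : ∃ x y, smulBy a x y = z := by
  obtain ⟨p, q, hz⟩ := normal_form z
  obtain ⟨p', q', ha⟩ := normal_form a
  obtain ⟨k, hk⟩ : ∃ k, srank z = k := ⟨_, rfl⟩
  rw [hk] at hz h
  refine ⟨(p.toPEquiv.trans (sandE n k)).trans p'.symm.toPEquiv,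
          (q'.symm.toPEquiv.trans (sandE n k)).trans q.toPEquiv, ?_⟩
  rw [smulBy]
  conv_lhs => rw [ha]
  rw [hz]
  simp only [PEquiv.trans_assoc, cancel₁, cancel₂, sandE_trans_le h,
    sandE_trans_le (le_refl k)]

/-- Conjugation by a pair of permutations, as a bijection of `IS n`. -/
noncomputable def conjIS (g h : Perm (Fin n)) : IS n ≃ IS n where
  toFun x := (g.toPEquiv.trans x).trans h.toPEquiv
  invFun x := (g.symm.toPEquiv.trans x).trans h.symm.toPEquiv
  left_inv x := by
    simp only [PEquiv.trans_assoc, cancel₂, perm_cancel, perm_cancel', PEquiv.trans_refl]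
  right_inv x := by
    simp only [PEquiv.trans_assoc, cancel₁, perm_cancel, perm_cancel', PEquiv.trans_refl]

lemma Pset_image {a b : IS n} (φ : IS n ≃ IS n)
    (hom : ∀ x y : IS n, φ (smulBy a x y) = smulBy b (φ x) (φ y)) :
    φ '' {z : IS n | srank z ≤ srank a} = {z : IS n | srank z ≤ srank b} := by
  apply Set.eq_of_subset_of_subset
  · rintro w ⟨z, hz, rfl⟩
    obtain ⟨x, y, rfl⟩ := smulBy_factor hz
    rw [hom]
    exact srank_smulBy_le b (φ x) (φ y)
  · intro w hw
    obtain ⟨u, v, rfl⟩ := smulBy_factor (le_refl (srank b) |>.trans' hw)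
    refine ⟨smulBy a (φ.symm u) (φ.symm v), srank_smulBy_le a _ _, ?_⟩
    rw [hom, Equiv.apply_symm_apply, Equiv.apply_symm_apply]

lemma srank_eq_of_hom {a b : IS n} (φ : IS n ≃ IS n)
    (hom : ∀ x y : IS n, φ (smulBy a x y) = smulBy b (φ x) (φ y)) :
    srank a = srank b := by
  have hcard : ({z : IS n | srank z ≤ srank a}).ncard = ({z : IS n | srank z ≤ srank b}).ncard := by
    rw [← Pset_image φ hom, Set.ncard_image_of_injective _ φ.injective]
  by_contra hne
  have key : ∀ c d : IS n, srank c < srank d →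
      ({z : IS n | srank z ≤ srank c}).ncard < ({z : IS n | srank z ≤ srank d}).ncard := by
    intro c d hcd
    apply Set.ncard_lt_ncard _ (Set.toFinite _)
    constructor
    · intro z hz
      exact le_trans hz (le_of_lt hcd)
    · intro hsub
      have := hsub (Set.mem_setOf.2 (le_refl (srank d)))
      simp only [Set.mem_setOf_eq] at this
      omega
  rcases lt_or_gt_of_ne hne with h | h
  · exact absurd hcard (ne_of_lt (key a b h))
  · exact absurd hcard.symm (ne_of_lt (key b a h))

end Aux

/-- `(IS_n, *_a)` and `(IS_n, *_b)` are isomorphic as semigroups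
iff `rank a = rank b`. -/
theorem sandwich_iso_iff_rank_eq (n : ℕ) (hn : 0 < n) (a b : IS n) :
    (∃ φ : IS n ≃ IS n, ∀ x y : IS n,
        φ (smulBy a x y) = smulBy b (φ x) (φ y)) ↔ srank a = srank b := by
  constructor
  · rintro ⟨φ, hom⟩
    exact srank_eq_of_hom φ hom
  · intro hrk
    obtain ⟨pa, qa, ha⟩ := normal_form a
    obtain ⟨pb, qb, hb⟩ := normal_form b
    rw [← hrk] at hb
    refine ⟨conjIS (qb.symm.trans qa) (pa.trans pb.symm), ?_⟩
    intro x y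
    simp only [conjIS, Equiv.coe_fn_mk, smulBy]
    rw [ha, hb]
    simp only [Equiv.toPEquiv_trans, PEquiv.trans_assoc, cancel₁, cancel₂]
end

section
/- The sandwich idempotent e is the maximum element of the set of idempotents of (IS_n, *) under the natural partial order (f ≤ h ⟺ f * h = h * f = f); consequently, every semigroup automorphism φ of (IS_n, *) satisfies φ(e) = e. -/
open Equiv

/-- `e` is the maximum idempotent of `(IS_n, *)` for the natural
partial order, and every automorphism of `(IS_n, *)` fixes `e`. -/
theorem sandE_max_idempotent_and_fixed (n k : ℕ) (hk : 1 ≤ k) (hkn : k ≤ n) :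
    smul n k (sandE n k) (sandE n k) = sandE n k ∧
    (∀ f : IS n, smul n k f f = f →
      smul n k f (sandE n k) = f ∧ smul n k (sandE n k) f = f) ∧
    (∀ φ : Equiv.Perm (IS n),
      (∀ x y : IS n, φ (smul n k x y) = smul n k (φ x) (φ y)) →
        φ (sandE n k) = sandE n k) := by
  have happ : ∀ (x y : IS n) (a : Fin n),
      smul n k x y a = ((x a).bind (sandE n k)).bind y := fun _ _ _ => rfl
  have heapp : ∀ a : Fin n, sandE n k a = if (a : ℕ) < k then some a else none :=
    fun _ => rfl
  have hee : smul n k (sandE n k) (sandE n k) = sandE n k := by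
    ext a
    rw [happ, heapp]
    split_ifs with h <;> simp [heapp, h]
  have hmax : ∀ f : IS n, smul n k f f = f →
      smul n k f (sandE n k) = f ∧ smul n k (sandE n k) f = f := by
    intro f hf
    -- key: f is a partial identity on a subset of A
    have key : ∀ a b : Fin n, f a = some b → (b : ℕ) < k ∧ f b = some b := by
      intro a b hab
      have := congrFun (congrArg (fun g : IS n => (g : Fin n → Option (Fin n))) hf) a
      rw [happ, hab] at this
      simp only [Option.bind_some, heapp] at this
      by_cases hb : (b : ℕ) < k
      · simp [hb, hab] at this
        exact ⟨hb, this⟩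
      · simp [hb, hab] at this
    have fixed : ∀ a b : Fin n, f a = some b → a = b ∧ (a : ℕ) < k := by
      intro a b hab
      obtain ⟨hbk, hbb⟩ := key a b hab
      have : a = b := PEquiv.inj f hab hbb
      exact ⟨this, this ▸ hbk⟩
    constructor
    · ext a
      rw [happ]
      cases hfa : f a with
      | none => simp
      | some b =>
        obtain ⟨rfl, hak⟩ := fixed a b hfa
        simp [heapp, hak]
    · ext a
      rw [happ, heapp]
      split_ifs with h
      · simp [heapp, h]
      · cases hfa : f a with
        | none => simp
        | some b =>
          obtain ⟨rfl, hak⟩ := fixed a b hfa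
          exact absurd hak h
  refine ⟨hee, hmax, ?_⟩
  intro φ hφ
  set g := φ (sandE n k) with hg
  have hginv : ∀ x y : IS n, φ.symm (smul n k x y) = smul n k (φ.symm x) (φ.symm y) := by
    intro x y
    apply φ.injective
    rw [hφ]
    simp
  set h := φ.symm (sandE n k) with hh
  have hgid : smul n k g g = g := by rw [hg, ← hφ, hee]
  have hhid : smul n k h h = h := by rw [hh, ← hginv, hee]
  have h1 : smul n k g (sandE n k) = g := (hmax g hgid).1
  have h2 : smul n k g (sandE n k) = sandE n k := by
    have := (hmax h hhid).2
    have := congrArg φ this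
    rw [hφ] at this
    simpa [hg, hh] using this
  rw [← h1, h2]
end

section
/- Main theorem: Let 𝒩 be the subgroup of Aut(IS_n, *) of all automorphisms π with π(a) ∼ a for all a ∈ IS_n, and let ℋ be the image in Aut(IS_n, *) of the injective homomorphism (g, h₁, h₂) ↦ τ_(g,h₁,h₂) from S(A) × S(Ā) × S(Ā). Then 𝒩 is normal in Aut(IS_n, *), 𝒩 ∩ ℋ is trivial, and 𝒩 · ℋ = Aut(IS_n, *); consequently Aut(IS_n, *) is isomorphic to the semidirect product 𝒩 ⋊ (S(A) × S(Ā) × S(Ā)). -/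
open Equiv

/-- `a` is decomposable in `(IS_n, *)` if `a = b * c` for some `b, c`. -/
def Decomp (n k : ℕ) (a : IS n) : Prop := ∃ b c : IS n, smul n k b c = a

/-- `M₁(a) = {x ∈ dom a : x ∈ A, a x ∈ A}`. -/
def M1 (n k : ℕ) (a : IS n) : Set (Fin n) :=
  {x | x ∈ SetA n k ∧ ∃ y ∈ SetA n k, a x = some y}

/-- `M₂(a) = {x ∈ dom a : x ∈ A, a x ∈ Ā}`. -/
def M2 (n k : ℕ) (a : IS n) : Set (Fin n) :=
  {x | x ∈ SetA n k ∧ ∃ y, y ∉ SetA n k ∧ a x = some y}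

/-- `M₃(a) = {x ∈ dom a : x ∈ Ā, a x ∈ A}`. -/
def M3 (n k : ℕ) (a : IS n) : Set (Fin n) :=
  {x | x ∉ SetA n k ∧ ∃ y ∈ SetA n k, a x = some y}

/-- The relation `∼` : for indecomposable `a, b`, `a ∼ b` iff `Mᵢ(a) = Mᵢ(b)` for
`i = 1,2,3` and `a x = b x` on `M₁(a) ∪ M₂(a) ∪ M₃(a)`; if `a` or `b` is
decomposable, `a ∼ b` iff `a = b`. -/
def SimRel (n k : ℕ) (a b : IS n) : Prop :=
  (¬ Decomp n k a ∧ ¬ Decomp n k b ∧ M1 n k a = M1 n k b ∧ M2 n k a = M2 n k b ∧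
    M3 n k a = M3 n k b ∧ ∀ x ∈ M1 n k a ∪ M2 n k a ∪ M3 n k a, a x = b x)
  ∨ ((Decomp n k a ∨ Decomp n k b) ∧ a = b)

/-- `g⋈h` : the permutation of `Fin n` acting as `g` on `A` and as `h` on `Ā`. -/
def bowtie {n : ℕ} (k : ℕ) (g : Perm {x : Fin n // (x : ℕ) < k})
    (h : Perm {x : Fin n // ¬ (x : ℕ) < k}) : Perm (Fin n) :=
  Equiv.Perm.subtypeCongr g h

/-- `τ_(g,h₁,h₂) : a ↦ (g⋈h₁)⁻¹ · a · (g⋈h₂)` (ordinary, left-to-right, composition). -/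
def tauMap {n : ℕ} (k : ℕ) (g : Perm {x : Fin n // (x : ℕ) < k})
    (h₁ h₂ : Perm {x : Fin n // ¬ (x : ℕ) < k}) (a : IS n) : IS n :=
  ((bowtie k g h₁).symm.toPEquiv.trans a).trans (bowtie k g h₂).toPEquiv

theorem Equiv.Perm.apply_inv_self {α : Type*} (f : Perm α) (x : α) : f (f⁻¹ x) = x :=
  f.apply_symm_apply x

theorem Equiv.Perm.inv_apply_self {α : Type*} (f : Perm α) (x : α) : f⁻¹ (f x) = x :=
  f.symm_apply_apply x

namespace Sand

variable {n k : ℕ}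

theorem trans_apply (f g : IS n) (t : Fin n) : (f.trans g) t = (f t).bind g := rfl

theorem smul_apply (x y : IS n) (t : Fin n) :
    smul n k x y t = ((x t).bind (sandE n k)).bind y := rfl

theorem sandE_apply (t : Fin n) :
    sandE n k t = if (t : ℕ) < k then some t else none := rfl

theorem sandE_eq_some {t y : Fin n} (h : sandE n k t = some y) :
    y = t ∧ (t : ℕ) < k := by
  rw [sandE_apply] at h
  split_ifs at h with h1
  exact ⟨(Option.some_injective _ h).symm, h1⟩

theorem sandE_of_lt {t : Fin n} (h : (t : ℕ) < k) : sandE n k t = some t := by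
  rw [sandE_apply, if_pos h]

/-- left-to-right agreement predicates -/
def agreeOnA (n k : ℕ) (a b : IS n) : Prop := ∀ x : Fin n, (x : ℕ) < k → a x = b x

def agreeIntoA (n k : ℕ) (a b : IS n) : Prop :=
    ∀ t, (a t).bind (sandE n k) = (b t).bind (sandE n k)

theorem smul_right_congr (c : IS n) {a b : IS n} (h : agreeOnA n k a b) :
    smul n k c a = smul n k c b := by
  apply PEquiv.ext; intro t
  rw [smul_apply, smul_apply]
  rcases o : (c t).bind (sandE n k) with _ | x
  · rfl
  · rcases Option.bind_eq_some_iff.1 o with ⟨u, _, hu⟩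
    obtain ⟨rfl, hlt⟩ := sandE_eq_some hu
    exact h x hlt

theorem smul_left_congr (c : IS n) {a b : IS n} (h : agreeIntoA n k a b) :
    smul n k a c = smul n k b c := by
  apply PEquiv.ext; intro t
  rw [smul_apply, smul_apply, h t]

end Sand
namespace Sand
variable {n k : ℕ}

theorem single_apply' (a b t : Fin n) :
    (PEquiv.single a b) t = if t = a then some b else none := rfl

theorem single_eq_single_iff {a b c d : Fin n} :
    PEquiv.single a b = PEquiv.single c d ↔ a = c ∧ b = d := by
  constructor
  · intro h
    have h1 : (PEquiv.single a b) a = (PEquiv.single c d) a := by rw [h]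
    rw [PEquiv.single_apply, single_apply'] at h1
    split_ifs at h1 with h2
    exact ⟨h2, (Option.some_injective _ h1)⟩
  · rintro ⟨rfl, rfl⟩; rfl

theorem single_ne_bot (a b : Fin n) : PEquiv.single a b ≠ (⊥ : IS n) := by
  intro h
  have : (PEquiv.single a b) a = (⊥ : IS n) a := by rw [h]
  rw [PEquiv.single_apply] at this
  simp [PEquiv.bot_apply] at this

theorem smul_bot (a : IS n) : smul n k a ⊥ = ⊥ := PEquiv.trans_bot _

theorem bot_smul (a : IS n) : smul n k ⊥ a = ⊥ := by
  unfold smul; rw [PEquiv.bot_trans, PEquiv.bot_trans]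

theorem smul_single_left_some {x y : Fin n} (hx : (x : ℕ) < k) (s : Fin n) {a : IS n}
    (hy : a x = some y) : smul n k (PEquiv.single s x) a = PEquiv.single s y := by
  apply PEquiv.ext; intro t
  rw [smul_apply, single_apply', single_apply']
  by_cases h : t = s
  · simp [h, sandE_of_lt hx, hy]
  · simp [h]

theorem smul_single_left_none {x : Fin n} (hx : (x : ℕ) < k) (s : Fin n) {a : IS n}
    (hy : a x = none) : smul n k (PEquiv.single s x) a = ⊥ := by
  apply PEquiv.ext; intro t
  rw [smul_apply, single_apply', PEquiv.bot_apply]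
  by_cases h : t = s
  · simp [h, sandE_of_lt hx, hy]
  · simp [h]

theorem smul_single_right_some {y t : Fin n} (hy : (y : ℕ) < k) (s : Fin n) {a : IS n}
    (ht : a.symm y = some t) : smul n k a (PEquiv.single y s) = PEquiv.single t s := by
  have hat : a t = some y := (PEquiv.eq_some_iff a).1 ht
  apply PEquiv.ext; intro u
  rw [smul_apply, single_apply']
  rcases h : a u with _ | v
  · have : ¬ u = t := by rintro rfl; rw [h] at hat; exact nomatch hat
    simp [this]
  · by_cases hv : v = y
    · subst hv
      have : u = t := by
        have := (PEquiv.eq_some_iff a).2 h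
        rw [ht] at this; exact (Option.some_injective _ this).symm
      simp [this, sandE_of_lt hy, single_apply']
    · have : ¬ u = t := by rintro rfl; rw [h] at hat; exact hv (Option.some_injective _ hat)
      rcases Nat.lt_or_ge (v : ℕ) k with hlt | hge
      · simp [sandE_of_lt hlt, single_apply', hv, this]
      · have : sandE n k v = none := by rw [sandE_apply, if_neg (Nat.not_lt.2 hge)]
        simp [this, ‹¬ u = t›]

theorem smul_single_right_none {y : Fin n} (hy : (y : ℕ) < k) (s : Fin n) {a : IS n}
    (ht : a.symm y = none) : smul n k a (PEquiv.single y s) = ⊥ := by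
  apply PEquiv.ext; intro u
  rw [smul_apply, PEquiv.bot_apply]
  rcases h : a u with _ | v
  · rfl
  · have hv : v ≠ y := by
      rintro rfl
      rw [(PEquiv.eq_some_iff a).2 h] at ht; exact nomatch ht
    rcases Nat.lt_or_ge (v : ℕ) k with hlt | hge
    · simp [sandE_of_lt hlt, single_apply', hv]
    · have : sandE n k v = none := by rw [sandE_apply, if_neg (Nat.not_lt.2 hge)]
      simp [this]

theorem smul_single_single {b : Fin n} (hb : (b : ℕ) < k) (a c : Fin n) :
    smul n k (PEquiv.single a b) (PEquiv.single b c) = PEquiv.single a c :=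
  smul_single_left_some hb a (PEquiv.single_apply b c)

theorem smul_single_single_ne {b b' : Fin n} (hb : (b : ℕ) < k) (hne : b ≠ b') (a c : Fin n) :
    smul n k (PEquiv.single a b) (PEquiv.single b' c) = ⊥ :=
  smul_single_left_none hb a (PEquiv.single_apply_of_ne (Ne.symm hne) c)

end Sand
namespace Sand
variable {n k : ℕ}

theorem mem_M1 {a : IS n} {x : Fin n} :
    x ∈ M1 n k a ↔ (x : ℕ) < k ∧ ∃ y : Fin n, (y : ℕ) < k ∧ a x = some y := Iff.rfl

theorem mem_M2 {a : IS n} {x : Fin n} :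
    x ∈ M2 n k a ↔ (x : ℕ) < k ∧ ∃ y : Fin n, ¬ (y : ℕ) < k ∧ a x = some y := Iff.rfl

theorem mem_M3 {a : IS n} {x : Fin n} :
    x ∈ M3 n k a ↔ ¬ (x : ℕ) < k ∧ ∃ y : Fin n, (y : ℕ) < k ∧ a x = some y := Iff.rfl

theorem simrel_refl (a : IS n) : SimRel n k a a := by
  by_cases h : Decomp n k a
  · exact Or.inr ⟨Or.inl h, rfl⟩
  · exact Or.inl ⟨h, h, rfl, rfl, rfl, fun _ _ => rfl⟩

theorem simrel_symm {a b : IS n} (h : SimRel n k a b) : SimRel n k b a := by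
  rcases h with ⟨da, db, h1, h2, h3, hv⟩ | ⟨hd, heq⟩
  · refine Or.inl ⟨db, da, h1.symm, h2.symm, h3.symm, fun x hx => ?_⟩
    rw [← h1, ← h2, ← h3] at hx
    exact (hv x hx).symm
  · exact Or.inr ⟨hd.symm, heq.symm⟩

theorem simrel_trans {a b c : IS n} (h : SimRel n k a b) (h' : SimRel n k b c) :
    SimRel n k a c := by
  rcases h' with ⟨db, dc, h1', h2', h3', hv'⟩ | ⟨hd', heq'⟩
  · rcases h with ⟨da, _, h1, h2, h3, hv⟩ | ⟨hd, heq⟩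
    · refine Or.inl ⟨da, dc, h1.trans h1', h2.trans h2', h3.trans h3', fun x hx => ?_⟩
      refine (hv x hx).trans (hv' x ?_)
      rwa [← h1, ← h2, ← h3]
    · rcases hd with hd | hd
      · subst heq; exact absurd hd db
      · subst heq; exact absurd hd db
  · subst heq'; exact h

theorem decomp_smul (x y : IS n) : Decomp n k (smul n k x y) := ⟨x, y, rfl⟩

theorem simrel_of_decomp {a b : IS n} (h : SimRel n k a b) (hd : Decomp n k a ∨ Decomp n k b) :
    a = b := by
  rcases h with ⟨da, db, _⟩ | ⟨_, heq⟩
  · rcases hd with hd | hd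
    · exact absurd hd da
    · exact absurd hd db
  · exact heq

theorem simrel_agreeOnA {a b : IS n} (h : SimRel n k a b) : agreeOnA n k a b := by
  rcases h with ⟨da, db, h1, h2, h3, hv⟩ | ⟨_, heq⟩
  · intro x hx
    rcases o : a x with _ | y
    · rcases o' : b x with _ | z
      · rfl
      · by_cases hz : (z : ℕ) < k
        · have hm : x ∈ M1 n k b := mem_M1.2 ⟨hx, z, hz, o'⟩
          rw [← h1] at hm
          obtain ⟨_, y', _, hy'⟩ := mem_M1.1 hm
          rw [o] at hy'; exact nomatch hy'
        · have hm : x ∈ M2 n k b := mem_M2.2 ⟨hx, z, hz, o'⟩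
          rw [← h2] at hm
          obtain ⟨_, y', _, hy'⟩ := mem_M2.1 hm
          rw [o] at hy'; exact nomatch hy'
    · rw [← o]
      by_cases hy : (y : ℕ) < k
      · exact hv x (Or.inl (Or.inl (mem_M1.2 ⟨hx, y, hy, o⟩)))
      · exact hv x (Or.inl (Or.inr (mem_M2.2 ⟨hx, y, hy, o⟩)))
  · rw [heq]; intro _ _; rfl

theorem simrel_agreeIntoA {a b : IS n} (h : SimRel n k a b) : agreeIntoA n k a b := by
  have hsymm := simrel_symm h
  rcases h with ⟨da, db, h1, h2, h3, hv⟩ | ⟨_, heq⟩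
  · intro t
    rcases o : a t with _ | y
    · rcases o' : b t with _ | z
      · rfl
      · by_cases hz : (z : ℕ) < k
        · exfalso
          by_cases ht : (t : ℕ) < k
          · have hm : t ∈ M1 n k b := mem_M1.2 ⟨ht, z, hz, o'⟩
            rw [← h1] at hm
            obtain ⟨_, y', _, hy'⟩ := mem_M1.1 hm
            rw [o] at hy'; exact nomatch hy'
          · have hm : t ∈ M3 n k b := mem_M3.2 ⟨ht, z, hz, o'⟩
            rw [← h3] at hm
            obtain ⟨_, y', _, hy'⟩ := mem_M3.1 hm
            rw [o] at hy'; exact nomatch hy'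
        · simp [sandE_apply, hz]
    · by_cases hy : (y : ℕ) < k
      · have hval : a t = b t := by
          by_cases ht : (t : ℕ) < k
          · exact hv t (Or.inl (Or.inl (mem_M1.2 ⟨ht, y, hy, o⟩)))
          · exact hv t (Or.inr (mem_M3.2 ⟨ht, y, hy, o⟩))
        rw [← hval, o]
      · rcases o' : b t with _ | z
        · simp [sandE_apply, hy]
        · by_cases hz : (z : ℕ) < k
          · exfalso
            have hval : b t = a t := by
              by_cases ht : (t : ℕ) < k
              · exact (simrel_agreeOnA hsymm) t ht
              · have hm : t ∈ M3 n k b := mem_M3.2 ⟨ht, z, hz, o'⟩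
                rcases hsymm with ⟨_, _, h1s, h2s, h3s, hvs⟩ | ⟨_, heq⟩
                · exact hvs t (Or.inr hm)
                · rw [heq]
            rw [o, o'] at hval
            have := Option.some_injective _ hval
            subst this; exact hy hz
          · simp [sandE_apply, hy, hz]
  · rw [heq]; intro _; rfl

/-- The automorphism group of the sandwich semigroup. -/
def AutS (n k : ℕ) : Subgroup (Perm (IS n)) where
  carrier := {φ | ∀ x y : IS n, φ (smul n k x y) = smul n k (φ x) (φ y)}
  one_mem' := by intro x y; rfl
  mul_mem' := by
    intro φ ψ hφ hψ x y
    simp only [Perm.mul_apply]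
    rw [hψ, hφ]
  inv_mem' := by
    intro φ hφ x y
    apply φ.injective
    rw [hφ]
    simp only [Perm.apply_inv_self]

/-- The normal subgroup `𝒩`. -/
def NNS (n k : ℕ) : Subgroup (Perm (IS n)) where
  carrier := {π | ∀ a, SimRel n k (π a) a}
  one_mem' := fun a => simrel_refl a
  mul_mem' := by
    intro φ ψ hφ hψ a
    exact simrel_trans (hφ (ψ a)) (hψ a)
  inv_mem' := by
    intro φ hφ a
    have := simrel_symm (hφ (φ⁻¹ a))
    rwa [Perm.apply_inv_self] at this

theorem mem_AutS {φ : Perm (IS n)} :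
    φ ∈ AutS n k ↔ ∀ x y : IS n, φ (smul n k x y) = smul n k (φ x) (φ y) := Iff.rfl

theorem mem_NNS {π : Perm (IS n)} : π ∈ NNS n k ↔ ∀ a, SimRel n k (π a) a := Iff.rfl

theorem NNS_le_AutS : NNS n k ≤ AutS n k := by
  intro π hπ
  rw [mem_AutS]
  intro x y
  have h1 : π (smul n k x y) = smul n k x y :=
    simrel_of_decomp (hπ (smul n k x y)) (Or.inr (decomp_smul x y))
  rw [h1]
  have h2 : smul n k (π x) (π y) = smul n k x (π y) :=
    smul_left_congr _ (simrel_agreeIntoA (hπ x))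
  have h3 : smul n k x (π y) = smul n k x y := smul_right_congr x (simrel_agreeOnA (hπ y))
  exact (h2.trans h3).symm

end Sand
namespace Sand
variable {n k : ℕ}

abbrev PA (n k : ℕ) := Perm {x : Fin n // (x : ℕ) < k}
abbrev PB (n k : ℕ) := Perm {x : Fin n // ¬ (x : ℕ) < k}

theorem bowtie_apply_lt (g : PA n k) (h : PB n k) {t : Fin n} (ht : (t : ℕ) < k) :
    bowtie k g h t = ↑(g ⟨t, ht⟩) := Perm.subtypeCongr.left_apply g h ht

theorem bowtie_apply_not_lt (g : PA n k) (h : PB n k) {t : Fin n} (ht : ¬ (t : ℕ) < k) :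
    bowtie k g h t = ↑(h ⟨t, ht⟩) := Perm.subtypeCongr.right_apply g h ht

theorem bowtie_lt_iff (g : PA n k) (h : PB n k) (t : Fin n) :
    ((bowtie k g h t : Fin n) : ℕ) < k ↔ (t : ℕ) < k := by
  by_cases ht : (t : ℕ) < k
  · rw [bowtie_apply_lt g h ht]
    exact iff_of_true (g ⟨t, ht⟩).2 ht
  · rw [bowtie_apply_not_lt g h ht]
    exact iff_of_false (h ⟨t, ht⟩).2 ht

theorem bowtie_mul (g g' : PA n k) (h h' : PB n k) :
    bowtie k (g * g') (h * h') = bowtie k g h * bowtie k g' h' := by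
  apply Equiv.ext; intro t
  by_cases ht : (t : ℕ) < k
  · rw [Perm.mul_apply, bowtie_apply_lt _ _ ht, bowtie_apply_lt _ _ ht,
      bowtie_apply_lt g h (g' ⟨t, ht⟩).2]
    simp
  · rw [Perm.mul_apply, bowtie_apply_not_lt _ _ ht, bowtie_apply_not_lt _ _ ht,
      bowtie_apply_not_lt g h (h' ⟨t, ht⟩).2]
    simp

/-- conjugation-like permutation of `IS n` by a pair of permutations of `Fin n`. -/
def condConj (p q : Perm (Fin n)) : Perm (IS n) where
  toFun a := (p.symm.toPEquiv.trans a).trans q.toPEquiv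
  invFun a := (p.toPEquiv.trans a).trans q.symm.toPEquiv
  left_inv a := by
    apply PEquiv.ext; intro t
    simp only [trans_apply, Equiv.toPEquiv_apply, Option.bind_some, Equiv.symm_apply_apply]
    rcases a t with _ | y <;> simp
  right_inv a := by
    apply PEquiv.ext; intro t
    simp only [trans_apply, Equiv.toPEquiv_apply, Option.bind_some, Equiv.apply_symm_apply]
    rcases a t with _ | y <;> simp

theorem condConj_apply (p q : Perm (Fin n)) (a : IS n) (t : Fin n) :
    condConj p q a t = (a (p.symm t)).map q := by
  show ((p.symm.toPEquiv.trans a).trans q.toPEquiv) t = _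
  simp only [trans_apply, Equiv.toPEquiv_apply, Option.bind_some]
  rcases a (p.symm t) with _ | y <;> simp

theorem condConj_def (p q : Perm (Fin n)) (a : IS n) :
    condConj p q a = (p.symm.toPEquiv.trans a).trans q.toPEquiv := rfl

theorem condConj_mul (p p' q q' : Perm (Fin n)) :
    condConj (p * p') (q * q') = condConj p q * condConj p' q' := by
  apply Equiv.ext; intro a
  apply PEquiv.ext; intro t
  rw [Perm.mul_apply, condConj_apply, condConj_apply, condConj_apply]
  have : (p * p').symm t = p'.symm (p.symm t) := rfl
  rw [this]
  rcases a (p'.symm (p.symm t)) with _ | y <;> simp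

theorem condConj_single (p q : Perm (Fin n)) (x y : Fin n) :
    condConj p q (PEquiv.single x y) = PEquiv.single (p x) (q y) := by
  apply PEquiv.ext; intro t
  rw [condConj_apply, single_apply', single_apply']
  by_cases h : t = p x
  · have : p.symm t = x := by rw [h]; exact p.symm_apply_apply x
    simp [h, this]
  · have : ¬ p.symm t = x := by
      intro hc; exact h (by rw [← hc]; exact (p.apply_symm_apply t).symm)
    simp [h, this]

theorem condConj_bot (p q : Perm (Fin n)) : condConj p q (⊥ : IS n) = ⊥ := by
  apply PEquiv.ext; intro t
  rw [condConj_apply]; simp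

/-- The homomorphism `Φ`. -/
noncomputable def Phi (n k : ℕ) : (PA n k × PB n k × PB n k) →* Perm (IS n) :=
  MonoidHom.mk' (fun G => condConj (bowtie k G.1 G.2.1) (bowtie k G.1 G.2.2)) (by
    intro G H
    show condConj (bowtie k (G.1 * H.1) (G.2.1 * H.2.1)) (bowtie k (G.1 * H.1) (G.2.2 * H.2.2))
        = _
    rw [bowtie_mul, bowtie_mul, condConj_mul])

theorem Phi_apply (G : PA n k × PB n k × PB n k) :
    Phi n k G = condConj (bowtie k G.1 G.2.1) (bowtie k G.1 G.2.2) := rfl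

theorem Phi_tauMap (g : PA n k) (h₁ h₂ : PB n k) (a : IS n) :
    Phi n k (g, h₁, h₂) a = tauMap k g h₁ h₂ a := rfl

theorem Phi_injective : Function.Injective (Phi n k) := by
  rw [injective_iff_map_eq_one]
  intro G hG
  obtain ⟨g, h₁, h₂⟩ := G
  have hsingle : ∀ x y : Fin n,
      PEquiv.single (bowtie k g h₁ x) (bowtie k g h₂ y) = PEquiv.single x y := by
    intro x y
    have : Phi n k (g, h₁, h₂) (PEquiv.single x y) = PEquiv.single x y := by rw [hG]; rfl
    rw [Phi_apply, condConj_single] at this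
    exact this
  have hp1 : ∀ x : Fin n, bowtie k g h₁ x = x := by
    intro x
    exact ((single_eq_single_iff).1 (hsingle x x)).1
  have hp2 : ∀ y : Fin n, bowtie k g h₂ y = y := by
    intro y
    exact ((single_eq_single_iff).1 (hsingle y y)).2
  have hg : g = 1 := by
    apply Equiv.ext; intro a
    apply Subtype.ext
    have := hp1 a
    rw [bowtie_apply_lt g h₁ a.2] at this
    simpa using this
  have hh1 : h₁ = 1 := by
    apply Equiv.ext; intro a
    apply Subtype.ext
    have := hp1 a
    rw [bowtie_apply_not_lt g h₁ a.2] at this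
    simpa using this
  have hh2 : h₂ = 1 := by
    apply Equiv.ext; intro a
    apply Subtype.ext
    have := hp2 a
    rw [bowtie_apply_not_lt g h₂ a.2] at this
    simpa using this
  rw [hg, hh1, hh2]
  rfl

theorem e_conj (g : PA n k) (h₁ h₂ : PB n k) :
    (bowtie k g h₂).toPEquiv.trans ((sandE n k).trans (bowtie k g h₁).symm.toPEquiv) =
      sandE n k := by
  apply PEquiv.ext; intro t
  simp only [trans_apply, Equiv.toPEquiv_apply, Option.bind_some]
  by_cases ht : (t : ℕ) < k
  · have hlt : ((bowtie k g h₂ t : Fin n) : ℕ) < k := (bowtie_lt_iff g h₂ t).2 ht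
    rw [sandE_of_lt hlt, sandE_of_lt ht]
    simp only [Option.bind_some, Equiv.toPEquiv_apply]
    congr 1
    rw [Equiv.symm_apply_eq]
    rw [bowtie_apply_lt g h₂ ht, bowtie_apply_lt g h₁ ht]
  · have hlt : ¬ ((bowtie k g h₂ t : Fin n) : ℕ) < k := fun hc => ht ((bowtie_lt_iff g h₂ t).1 hc)
    rw [sandE_apply, sandE_apply, if_neg ht, if_neg hlt]
    rfl

theorem e_conj' (g : PA n k) (h₁ h₂ : PB n k) (Z : IS n) :
    (bowtie k g h₂).toPEquiv.trans ((sandE n k).trans ((bowtie k g h₁).symm.toPEquiv.trans Z)) =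
      (sandE n k).trans Z := by
  rw [← PEquiv.trans_assoc (sandE n k) _ Z, ← PEquiv.trans_assoc, e_conj]

theorem Phi_mem_AutS (G : PA n k × PB n k × PB n k) : Phi n k G ∈ AutS n k := by
  obtain ⟨g, h₁, h₂⟩ := G
  rw [mem_AutS]
  intro x y
  show condConj (bowtie k g h₁) (bowtie k g h₂) (smul n k x y)
      = smul n k (condConj (bowtie k g h₁) (bowtie k g h₂) x)
          (condConj (bowtie k g h₁) (bowtie k g h₂) y)
  rw [condConj_def, condConj_def, condConj_def]
  unfold smul
  simp only [PEquiv.trans_assoc]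
  rw [e_conj' g h₁ h₂]

end Sand
namespace Sand
variable {n k : ℕ}

theorem decomp_of_mem_AutS {σ : Perm (IS n)} (hσ : σ ∈ AutS n k) {a : IS n}
    (h : Decomp n k a) : Decomp n k (σ a) := by
  obtain ⟨b, c, rfl⟩ := h
  exact ⟨σ b, σ c, (hσ b c).symm⟩

theorem decomp_iff_of_mem_AutS {σ : Perm (IS n)} (hσ : σ ∈ AutS n k) {a : IS n} :
    Decomp n k (σ a) ↔ Decomp n k a := by
  constructor
  · intro h
    have := decomp_of_mem_AutS ((AutS n k).inv_mem hσ) h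
    rwa [Perm.inv_apply_self] at this
  · exact decomp_of_mem_AutS hσ

theorem bowtie_symm_lt_iff (g : PA n k) (h : PB n k) (t : Fin n) :
    (((bowtie k g h).symm t : Fin n) : ℕ) < k ↔ (t : ℕ) < k := by
  conv_rhs => rw [← (bowtie k g h).apply_symm_apply t]
  exact (bowtie_lt_iff g h _).symm

theorem mem_M1_condConj (g : PA n k) (h₁ h₂ : PB n k) (a : IS n) (t : Fin n) :
    t ∈ M1 n k (condConj (bowtie k g h₁) (bowtie k g h₂) a) ↔
      (bowtie k g h₁).symm t ∈ M1 n k a := by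
  rw [mem_M1, mem_M1, condConj_apply]
  constructor
  · rintro ⟨ht, y, hy, heq⟩
    obtain ⟨z, hz, rfl⟩ := Option.map_eq_some_iff.1 heq
    exact ⟨(bowtie_symm_lt_iff g h₁ t).2 ht, z, (bowtie_lt_iff g h₂ z).1 hy, hz⟩
  · rintro ⟨hs, z, hz, heq⟩
    refine ⟨(bowtie_symm_lt_iff g h₁ t).1 hs, bowtie k g h₂ z, (bowtie_lt_iff g h₂ z).2 hz, ?_⟩
    rw [heq]; rfl

theorem mem_M2_condConj (g : PA n k) (h₁ h₂ : PB n k) (a : IS n) (t : Fin n) :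
    t ∈ M2 n k (condConj (bowtie k g h₁) (bowtie k g h₂) a) ↔
      (bowtie k g h₁).symm t ∈ M2 n k a := by
  rw [mem_M2, mem_M2, condConj_apply]
  constructor
  · rintro ⟨ht, y, hy, heq⟩
    obtain ⟨z, hz, rfl⟩ := Option.map_eq_some_iff.1 heq
    exact ⟨(bowtie_symm_lt_iff g h₁ t).2 ht, z, fun hc => hy ((bowtie_lt_iff g h₂ z).2 hc), hz⟩
  · rintro ⟨hs, z, hz, heq⟩
    refine ⟨(bowtie_symm_lt_iff g h₁ t).1 hs, bowtie k g h₂ z,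
      fun hc => hz ((bowtie_lt_iff g h₂ z).1 hc), ?_⟩
    rw [heq]; rfl

theorem mem_M3_condConj (g : PA n k) (h₁ h₂ : PB n k) (a : IS n) (t : Fin n) :
    t ∈ M3 n k (condConj (bowtie k g h₁) (bowtie k g h₂) a) ↔
      (bowtie k g h₁).symm t ∈ M3 n k a := by
  rw [mem_M3, mem_M3, condConj_apply]
  constructor
  · rintro ⟨ht, y, hy, heq⟩
    obtain ⟨z, hz, rfl⟩ := Option.map_eq_some_iff.1 heq
    exact ⟨fun hc => ht ((bowtie_symm_lt_iff g h₁ t).1 hc), z, (bowtie_lt_iff g h₂ z).1 hy, hz⟩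
  · rintro ⟨hs, z, hz, heq⟩
    refine ⟨fun hc => hs ((bowtie_symm_lt_iff g h₁ t).2 hc), bowtie k g h₂ z,
      (bowtie_lt_iff g h₂ z).2 hz, ?_⟩
    rw [heq]; rfl

theorem Phi_simrel (G : PA n k × PB n k × PB n k) {u v : IS n} (h : SimRel n k u v) :
    SimRel n k (Phi n k G u) (Phi n k G v) := by
  obtain ⟨g, h₁, h₂⟩ := G
  rcases h with ⟨du, dv, hm1, hm2, hm3, hv⟩ | ⟨hd, rfl⟩
  · refine Or.inl ⟨fun hc => du ((decomp_iff_of_mem_AutS (Phi_mem_AutS _)).1 hc),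
      fun hc => dv ((decomp_iff_of_mem_AutS (Phi_mem_AutS _)).1 hc), ?_, ?_, ?_, ?_⟩
    · ext t
      rw [Phi_apply, mem_M1_condConj, mem_M1_condConj, hm1]
    · ext t
      rw [Phi_apply, mem_M2_condConj, mem_M2_condConj, hm2]
    · ext t
      rw [Phi_apply, mem_M3_condConj, mem_M3_condConj, hm3]
    · intro t ht
      have hs : (bowtie k g h₁).symm t ∈ M1 n k u ∪ M2 n k u ∪ M3 n k u := by
        rcases ht with (h' | h') | h'
        · exact Or.inl (Or.inl ((mem_M1_condConj g h₁ h₂ u t).1 h'))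
        · exact Or.inl (Or.inr ((mem_M2_condConj g h₁ h₂ u t).1 h'))
        · exact Or.inr ((mem_M3_condConj g h₁ h₂ u t).1 h')
      show Phi n k (g, h₁, h₂) u t = Phi n k (g, h₁, h₂) v t
      rw [Phi_apply, condConj_apply, condConj_apply, hv _ hs]
  · exact Or.inr ⟨hd.imp (decomp_of_mem_AutS (Phi_mem_AutS _))
      (decomp_of_mem_AutS (Phi_mem_AutS _)), rfl⟩

theorem Phi_conj_mem_NNS (G : PA n k × PB n k × PB n k) {π : Perm (IS n)}
    (hπ : π ∈ NNS n k) : Phi n k G * π * (Phi n k G)⁻¹ ∈ NNS n k := by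
  rw [mem_NNS]
  intro a
  have h1 : SimRel n k (π ((Phi n k G)⁻¹ a)) ((Phi n k G)⁻¹ a) := hπ _
  have h2 := Phi_simrel G h1
  rw [Perm.apply_inv_self] at h2
  exact h2
end Sand
namespace Sand
variable {n k : ℕ}

theorem smul_single_left_nlt {x : Fin n} (hx : ¬ (x : ℕ) < k) (s : Fin n) (a : IS n) :
    smul n k (PEquiv.single s x) a = ⊥ := by
  apply PEquiv.ext; intro t
  rw [smul_apply, single_apply', PEquiv.bot_apply]
  by_cases h : t = s
  · simp [h, sandE_apply, hx]
  · simp [h]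

theorem exists_some_of_ne_bot {a : IS n} (ha : a ≠ ⊥) : ∃ t y, a t = some y := by
  by_contra hc
  push_neg at hc
  apply ha
  apply PEquiv.ext; intro t
  rw [PEquiv.bot_apply]
  rcases o : a t with _ | y
  · rfl
  · exact absurd o (hc t y)

/-- primitivity predicate characterizing the rank-one idempotents `single x x`, `x ∈ A`. -/
def Prim (n k : ℕ) (a : IS n) : Prop :=
  a ≠ ⊥ ∧ smul n k a a = a ∧
    ∀ b, smul n k (smul n k a b) a = a ∨ smul n k (smul n k a b) a = ⊥

theorem prim_single {x : Fin n} (hx : (x : ℕ) < k) : Prim n k (PEquiv.single x x) := by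
  refine ⟨single_ne_bot x x, smul_single_single hx x x, fun b => ?_⟩
  rcases o : b x with _ | y
  · rw [smul_single_left_none hx x o, bot_smul]
    exact Or.inr rfl
  · rw [smul_single_left_some hx x o]
    by_cases hy : (y : ℕ) < k
    · by_cases hyx : y = x
      · rw [hyx, smul_single_single hx x x]
        exact Or.inl rfl
      · rw [smul_single_single_ne hy hyx x x]
        exact Or.inr rfl
    · rw [smul_single_left_nlt hy x _]
      exact Or.inr rfl

theorem prim_spec {a : IS n} (h : Prim n k a) :
    ∃ x : Fin n, (x : ℕ) < k ∧ a = PEquiv.single x x := by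
  obtain ⟨hne, hidem, hprim⟩ := h
  obtain ⟨t₀, y₀, ht₀⟩ := exists_some_of_ne_bot hne
  have h1 : smul n k a a t₀ = some y₀ := by rw [hidem, ht₀]
  rw [smul_apply, ht₀, Option.bind_some] at h1
  obtain ⟨u, hu, hau⟩ := Option.bind_eq_some_iff.1 h1
  obtain ⟨he, hy₀⟩ := sandE_eq_some hu
  rw [he] at hau
  -- now  a y₀ = some y₀  and  (y₀ : ℕ) < k
  have hsymm : a.symm y₀ = some y₀ := (PEquiv.eq_some_iff a).2 hau
  have hright : smul n k a (PEquiv.single y₀ y₀) = PEquiv.single y₀ y₀ :=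
    smul_single_right_some hy₀ y₀ hsymm
  have hleft : smul n k (PEquiv.single y₀ y₀) a = PEquiv.single y₀ y₀ :=
    smul_single_left_some hy₀ y₀ hau
  rcases hprim (PEquiv.single y₀ y₀) with hc | hc
  · rw [hright, hleft] at hc
    exact ⟨y₀, hy₀, hc.symm⟩
  · rw [hright, hleft] at hc
    exact absurd hc (single_ne_bot y₀ y₀)

theorem sigma_bot {σ : Perm (IS n)} (hσ : σ ∈ AutS n k) : σ ⊥ = ⊥ := by
  have h : ∀ x, smul n k (σ ⊥) x = σ ⊥ := by
    intro x
    obtain ⟨x', rfl⟩ := σ.surjective x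
    rw [← mem_AutS.1 hσ, bot_smul]
  have := h ⊥
  rw [smul_bot] at this
  exact this.symm

theorem prim_sigma {σ : Perm (IS n)} (hσ : σ ∈ AutS n k) {a : IS n} (h : Prim n k a) :
    Prim n k (σ a) := by
  obtain ⟨hne, hidem, hprim⟩ := h
  refine ⟨fun hc => hne (σ.injective (hc.trans (sigma_bot hσ).symm)), ?_, ?_⟩
  · rw [← mem_AutS.1 hσ, hidem]
  · intro b
    obtain ⟨b', rfl⟩ := σ.surjective b
    rw [← mem_AutS.1 hσ, ← mem_AutS.1 hσ]
    rcases hprim b' with hc | hc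
    · rw [hc]; exact Or.inl rfl
    · rw [hc, sigma_bot hσ]; exact Or.inr rfl

theorem row_char {x : Fin n} (hx : (x : ℕ) < k) {a : IS n} (ha : a ≠ ⊥)
    (h : smul n k (PEquiv.single x x) a = a) : ∃ y, a = PEquiv.single x y := by
  rcases o : a x with _ | y
  · rw [smul_single_left_none hx x o] at h
    exact absurd h.symm ha
  · rw [smul_single_left_some hx x o] at h
    exact ⟨y, h.symm⟩

theorem col_char {u : Fin n} (hu : (u : ℕ) < k) {a : IS n} (ha : a ≠ ⊥)
    (h : smul n k a (PEquiv.single u u) = a) : ∃ s, a = PEquiv.single s u := by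
  rcases o : a.symm u with _ | t
  · rw [smul_single_right_none hu u o] at h
    exact absurd h.symm ha
  · rw [smul_single_right_some hu u o] at h
    exact ⟨t, h.symm⟩

theorem sigma_single_ne_bot {σ : Perm (IS n)} (hσ : σ ∈ AutS n k) (x y : Fin n) :
    σ (PEquiv.single x y) ≠ ⊥ := fun hc =>
  single_ne_bot x y (σ.injective (hc.trans (sigma_bot hσ).symm))

/-- The main classification: an automorphism acts on rank-one elements via a pair of
`bowtie` permutations. -/
theorem exists_perms (hk : 1 ≤ k) (hkn : k ≤ n) {σ : Perm (IS n)} (hσ : σ ∈ AutS n k) :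
    ∃ (g : PA n k) (h₁ h₂ : PB n k), ∀ x y : Fin n,
      σ (PEquiv.single x y) =
        PEquiv.single (bowtie k g h₁ x) (bowtie k g h₂ y) := by
  classical
  have hσ' : σ⁻¹ ∈ AutS n k := (AutS n k).inv_mem hσ
  -- the distinguished element of A
  have h0n : (0 : ℕ) < n := Nat.lt_of_lt_of_le hk hkn
  set x₀ : Fin n := ⟨0, h0n⟩ with hx₀def
  have h₀ : (x₀ : ℕ) < k := hk
  -- step: G on A
  have hGex : ∀ x : Fin n, (x : ℕ) < k →
      ∃ y : Fin n, ((y : ℕ) < k ∧ σ (PEquiv.single x x) = PEquiv.single y y) :=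
    fun x hx => by
      obtain ⟨y, hy, he⟩ := prim_spec (prim_sigma hσ (prim_single hx))
      exact ⟨y, hy, he⟩
  choose G hGlt hGeq using hGex
  -- G is injective in the obvious sense
  have hGinj : ∀ (x : Fin n) (hx : (x : ℕ) < k) (x' : Fin n) (hx' : (x' : ℕ) < k),
      G x hx = G x' hx' → x = x' := by
    intro x hx x' hx' he
    have : σ (PEquiv.single x x) = σ (PEquiv.single x' x') := by
      rw [hGeq x hx, hGeq x' hx', he]
    have := σ.injective this
    exact (single_eq_single_iff.1 this).1
  -- G is surjective onto A
  have hGsurj : ∀ v : Fin n, (v : ℕ) < k → ∃ x : Fin n, ∃ hx : (x : ℕ) < k, G x hx = v := by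
    intro v hv
    obtain ⟨u, hu, he⟩ := prim_spec (prim_sigma hσ' (prim_single hv))
    refine ⟨u, hu, ?_⟩
    have : σ (PEquiv.single u u) = PEquiv.single v v := by
      rw [← he, Perm.apply_inv_self]
    rw [hGeq u hu] at this
    exact (single_eq_single_iff.1 this).1
  -- rows : σ (single x y) = single (G x) (V x y)
  have hVex : ∀ (x : Fin n) (hx : (x : ℕ) < k) (y : Fin n),
      ∃ v, σ (PEquiv.single x y) = PEquiv.single (G x hx) v := by
    intro x hx y
    have hrow : smul n k (PEquiv.single x x) (PEquiv.single x y) = PEquiv.single x y :=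
      smul_single_single hx x y
    have : smul n k (σ (PEquiv.single x x)) (σ (PEquiv.single x y)) = σ (PEquiv.single x y) := by
      rw [← mem_AutS.1 hσ, hrow]
    rw [hGeq x hx] at this
    exact row_char (hGlt x hx) (sigma_single_ne_bot hσ x y) this
  choose V hV using hVex
  -- columns : σ (single s u) = single (W u s) (G u)
  have hWex : ∀ (u : Fin n) (hu : (u : ℕ) < k) (s : Fin n),
      ∃ w, σ (PEquiv.single s u) = PEquiv.single w (G u hu) := by
    intro u hu s
    have hcol : smul n k (PEquiv.single s u) (PEquiv.single u u) = PEquiv.single s u :=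
      smul_single_single hu s u
    have : smul n k (σ (PEquiv.single s u)) (σ (PEquiv.single u u)) = σ (PEquiv.single s u) := by
      rw [← mem_AutS.1 hσ, hcol]
    rw [hGeq u hu] at this
    exact col_char (hGlt u hu) (sigma_single_ne_bot hσ s u) this
  choose W hW using hWex
  -- on A × A : V x u = G u
  have hVA : ∀ (x : Fin n) (hx : (x : ℕ) < k) (u : Fin n) (hu : (u : ℕ) < k),
      V x hx u = G u hu := by
    intro x hx u hu
    have := (hV x hx u).symm.trans (hW u hu x)
    exact (single_eq_single_iff.1 this).2.symm ▸ (single_eq_single_iff.1 this).2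
  -- on A × A : W u s = G s
  have hWA : ∀ (u : Fin n) (hu : (u : ℕ) < k) (s : Fin n) (hs : (s : ℕ) < k),
      W u hu s = G s hs := by
    intro u hu s hs
    have := (hW u hu s).symm.trans (hV s hs u)
    exact (single_eq_single_iff.1 this).1
  -- V is independent of the row index
  have hVind : ∀ (x : Fin n) (hx : (x : ℕ) < k) (x' : Fin n) (hx' : (x' : ℕ) < k) (y : Fin n),
      V x hx y = V x' hx' y := by
    intro x hx x' hx' y
    have hcomp : smul n k (PEquiv.single x' x) (PEquiv.single x y) = PEquiv.single x' y :=
      smul_single_single hx x' y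
    have hs : smul n k (σ (PEquiv.single x' x)) (σ (PEquiv.single x y))
        = σ (PEquiv.single x' y) := by rw [← mem_AutS.1 hσ, hcomp]
    rw [hW x hx x', hV x hx y, hV x' hx' y] at hs
    rw [smul_single_single (hGlt x hx) _ _] at hs
    exact ((single_eq_single_iff.1 hs).2).symm ▸ (single_eq_single_iff.1 hs).2
  -- W is independent of the column index
  have hWind : ∀ (u : Fin n) (hu : (u : ℕ) < k) (u' : Fin n) (hu' : (u' : ℕ) < k) (s : Fin n),
      W u hu s = W u' hu' s := by
    intro u hu u' hu' s
    have hcomp : smul n k (PEquiv.single s u) (PEquiv.single u u') = PEquiv.single s u' :=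
      smul_single_single hu s u'
    have hs : smul n k (σ (PEquiv.single s u)) (σ (PEquiv.single u u'))
        = σ (PEquiv.single s u') := by rw [← mem_AutS.1 hσ, hcomp]
    rw [hW u hu s, hV u hu u', hVA u hu u' hu', hW u' hu' s] at hs
    rw [smul_single_single (hGlt u hu) _ _] at hs
    exact (single_eq_single_iff.1 hs).1
  -- V maps Ā to Ā
  have hVnlt : ∀ (y : Fin n), ¬ (y : ℕ) < k → ¬ ((V x₀ h₀ y : Fin n) : ℕ) < k := by
    intro y hy hlt
    obtain ⟨u, hu, hGu⟩ := hGsurj _ hlt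
    have h1 : σ (PEquiv.single x₀ u) = PEquiv.single (G x₀ h₀) (V x₀ h₀ y) := by
      rw [hV x₀ h₀ u, hVA x₀ h₀ u hu, hGu]
    have h2 : σ (PEquiv.single x₀ u) = σ (PEquiv.single x₀ y) := by
      rw [h1, hV x₀ h₀ y]
    have := (single_eq_single_iff.1 (σ.injective h2)).2
    subst this
    exact hy hu
  -- W maps Ā to Ā
  have hWnlt : ∀ (s : Fin n), ¬ (s : ℕ) < k → ¬ ((W x₀ h₀ s : Fin n) : ℕ) < k := by
    intro s hs hlt
    obtain ⟨u, hu, hGu⟩ := hGsurj _ hlt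
    have h1 : σ (PEquiv.single u x₀) = PEquiv.single (W x₀ h₀ s) (G x₀ h₀) := by
      rw [hW x₀ h₀ u, hWA x₀ h₀ u hu, hGu]
    have h2 : σ (PEquiv.single u x₀) = σ (PEquiv.single s x₀) := by
      rw [h1, hW x₀ h₀ s]
    have := (single_eq_single_iff.1 (σ.injective h2)).1
    subst this
    exact hs hu
  -- build the three permutations
  have hgfun : Function.Injective (fun x : {x : Fin n // (x : ℕ) < k} =>
      (⟨G x.1 x.2, hGlt x.1 x.2⟩ : {x : Fin n // (x : ℕ) < k})) := by
    intro x y he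
    exact Subtype.ext (hGinj x.1 x.2 y.1 y.2 (congrArg Subtype.val he))
  have hh2fun : Function.Injective (fun y : {y : Fin n // ¬ (y : ℕ) < k} =>
      (⟨V x₀ h₀ y.1, hVnlt y.1 y.2⟩ : {y : Fin n // ¬ (y : ℕ) < k})) := by
    intro y y' he
    have hval : V x₀ h₀ y.1 = V x₀ h₀ y'.1 := congrArg Subtype.val he
    have : σ (PEquiv.single x₀ y.1) = σ (PEquiv.single x₀ y'.1) := by
      rw [hV x₀ h₀ y.1, hV x₀ h₀ y'.1, hval]
    exact Subtype.ext (single_eq_single_iff.1 (σ.injective this)).2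
  have hh1fun : Function.Injective (fun y : {y : Fin n // ¬ (y : ℕ) < k} =>
      (⟨W x₀ h₀ y.1, hWnlt y.1 y.2⟩ : {y : Fin n // ¬ (y : ℕ) < k})) := by
    intro y y' he
    have hval : W x₀ h₀ y.1 = W x₀ h₀ y'.1 := congrArg Subtype.val he
    have : σ (PEquiv.single y.1 x₀) = σ (PEquiv.single y'.1 x₀) := by
      rw [hW x₀ h₀ y.1, hW x₀ h₀ y'.1, hval]
    exact Subtype.ext (single_eq_single_iff.1 (σ.injective this)).1
  let g : PA n k := Equiv.ofBijective _ (Finite.injective_iff_bijective.1 hgfun)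
  let h₁ : PB n k := Equiv.ofBijective _ (Finite.injective_iff_bijective.1 hh1fun)
  let h₂ : PB n k := Equiv.ofBijective _ (Finite.injective_iff_bijective.1 hh2fun)
  have hgapp : ∀ (x : Fin n) (hx : (x : ℕ) < k), bowtie k g h₁ x = G x hx ∧
      bowtie k g h₂ x = G x hx := by
    intro x hx
    constructor
    · rw [bowtie_apply_lt g h₁ hx]; rfl
    · rw [bowtie_apply_lt g h₂ hx]; rfl
  have hh1app : ∀ (x : Fin n) (hx : ¬ (x : ℕ) < k), bowtie k g h₁ x = W x₀ h₀ x := by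
    intro x hx
    rw [bowtie_apply_not_lt g h₁ hx]; rfl
  have hh2app : ∀ (y : Fin n) (hy : ¬ (y : ℕ) < k), bowtie k g h₂ y = V x₀ h₀ y := by
    intro y hy
    rw [bowtie_apply_not_lt g h₂ hy]; rfl
  refine ⟨g, h₁, h₂, fun x y => ?_⟩
  by_cases hx : (x : ℕ) < k <;> by_cases hy : (y : ℕ) < k
  · rw [(hgapp x hx).1, (hgapp y hy).2, hV x hx y, hVA x hx y hy]
  · rw [(hgapp x hx).1, hh2app y hy, hV x hx y, hVind x hx x₀ h₀ y]
  · rw [hh1app x hx, (hgapp y hy).2, hW y hy x, hWind y hy x₀ h₀ x]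
  · rw [hh1app x hx, hh2app y hy]
    have hcomp : smul n k (PEquiv.single x x₀) (PEquiv.single x₀ y) = PEquiv.single x y :=
      smul_single_single h₀ x y
    have hs : smul n k (σ (PEquiv.single x x₀)) (σ (PEquiv.single x₀ y))
        = σ (PEquiv.single x y) := by rw [← mem_AutS.1 hσ, hcomp]
    rw [hW x₀ h₀ x, hV x₀ h₀ y, smul_single_single (hGlt x₀ h₀) _ _] at hs
    exact hs.symm

end Sand
namespace Sand
variable {n k : ℕ}

theorem bindE_some_iff {o : Option (Fin n)} {y : Fin n} :
    o.bind (sandE n k) = some y ↔ o = some y ∧ (y : ℕ) < k := by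
  constructor
  · intro h
    rcases o with _ | u
    · exact absurd h (by simp)
    · rw [Option.bind_some] at h
      obtain ⟨he, hu⟩ := sandE_eq_some h
      subst he
      exact ⟨rfl, hu⟩
  · rintro ⟨rfl, hy⟩
    rw [Option.bind_some, sandE_of_lt hy]

theorem smul_single_diag_apply {x : Fin n} (hx : (x : ℕ) < k) (b : IS n) :
    smul n k (PEquiv.single x x) b x = b x := by
  rw [smul_apply, PEquiv.single_apply, Option.bind_some, sandE_of_lt hx, Option.bind_some]

theorem fix_singles_inv {σ : Perm (IS n)}
    (hfix : ∀ x y : Fin n, σ (PEquiv.single x y) = PEquiv.single x y) :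
    ∀ x y : Fin n, σ⁻¹ (PEquiv.single x y) = PEquiv.single x y := by
  intro x y
  conv_lhs => rw [← hfix x y]
  exact Perm.inv_apply_self σ _

theorem probe_onA {σ : Perm (IS n)} (hσ : σ ∈ AutS n k)
    (hfix : ∀ x y : Fin n, σ (PEquiv.single x y) = PEquiv.single x y) (a : IS n) :
    agreeOnA n k (σ a) a := by
  intro x hx
  rcases o : a x with _ | y
  · have h1 : smul n k (PEquiv.single x x) a = ⊥ := smul_single_left_none hx x o
    have h2 : smul n k (PEquiv.single x x) (σ a) = ⊥ := by
      rw [← hfix x x, ← mem_AutS.1 hσ, h1, sigma_bot hσ]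
    have := congrArg (fun f : IS n => f x) h2
    simp only [PEquiv.bot_apply] at this
    rw [smul_single_diag_apply hx (σ a)] at this
    exact this
  · have h1 : smul n k (PEquiv.single x x) a = PEquiv.single x y :=
      smul_single_left_some hx x o
    have h2 : smul n k (PEquiv.single x x) (σ a) = PEquiv.single x y := by
      rw [← hfix x x, ← mem_AutS.1 hσ, h1, hfix x y]
    have := congrArg (fun f : IS n => f x) h2
    simp only [PEquiv.single_apply] at this
    rw [smul_single_diag_apply hx (σ a)] at this
    exact this

theorem probe_intoA_some {σ : Perm (IS n)} (hσ : σ ∈ AutS n k)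
    (hfix : ∀ x y : Fin n, σ (PEquiv.single x y) = PEquiv.single x y) {a : IS n} {t x : Fin n}
    (h : (a t).bind (sandE n k) = some x) : (σ a t).bind (sandE n k) = some x := by
  obtain ⟨hat, hxk⟩ := bindE_some_iff.1 h
  have hsymm : a.symm x = some t := (PEquiv.eq_some_iff a).2 hat
  have h1 : smul n k a (PEquiv.single x x) = PEquiv.single t x :=
    smul_single_right_some hxk x hsymm
  have h2 : smul n k (σ a) (PEquiv.single x x) = PEquiv.single t x := by
    rw [← hfix x x, ← mem_AutS.1 hσ, h1, hfix t x]
  have h3 := congrArg (fun f : IS n => f t) h2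
  simp only [PEquiv.single_apply] at h3
  rw [smul_apply] at h3
  obtain ⟨u, hu, hux⟩ := Option.bind_eq_some_iff.1 h3
  have : u = x := by
    rw [single_apply'] at hux
    split_ifs at hux with h'
    exact h'
  rw [← this]
  exact hu

theorem probe_intoA {σ : Perm (IS n)} (hσ : σ ∈ AutS n k)
    (hfix : ∀ x y : Fin n, σ (PEquiv.single x y) = PEquiv.single x y) (a : IS n) :
    agreeIntoA n k (σ a) a := by
  intro t
  rcases o₂ : (a t).bind (sandE n k) with _ | x
  · rcases o₁ : (σ a t).bind (sandE n k) with _ | x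
    · rfl
    · exfalso
      have := probe_intoA_some ((AutS n k).inv_mem hσ) (fix_singles_inv hfix)
        (a := σ a) (t := t) (x := x) o₁
      rw [Perm.inv_apply_self] at this
      rw [o₂] at this
      exact nomatch this
  · rw [probe_intoA_some hσ hfix o₂]

theorem fix_decomp {σ : Perm (IS n)} (hσ : σ ∈ AutS n k)
    (hfix : ∀ x y : Fin n, σ (PEquiv.single x y) = PEquiv.single x y) {a : IS n}
    (ha : Decomp n k a) : σ a = a := by
  obtain ⟨b, c, rfl⟩ := ha
  rw [mem_AutS.1 hσ b c]
  rw [smul_right_congr (σ b) (probe_onA hσ hfix c), smul_left_congr c (probe_intoA hσ hfix b)]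

theorem agree_M (a b : IS n) (hOn : agreeOnA n k b a) (hInto : agreeIntoA n k b a) :
    M1 n k b = M1 n k a ∧ M2 n k b = M2 n k a ∧ M3 n k b = M3 n k a ∧
      ∀ x ∈ M1 n k b ∪ M2 n k b ∪ M3 n k b, b x = a x := by
  refine ⟨?_, ?_, ?_, ?_⟩
  · ext t
    rw [mem_M1, mem_M1]
    constructor
    · rintro ⟨ht, y, hy, he⟩; exact ⟨ht, y, hy, by rw [← hOn t ht]; exact he⟩
    · rintro ⟨ht, y, hy, he⟩; exact ⟨ht, y, hy, by rw [hOn t ht]; exact he⟩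
  · ext t
    rw [mem_M2, mem_M2]
    constructor
    · rintro ⟨ht, y, hy, he⟩; exact ⟨ht, y, hy, by rw [← hOn t ht]; exact he⟩
    · rintro ⟨ht, y, hy, he⟩; exact ⟨ht, y, hy, by rw [hOn t ht]; exact he⟩
  · ext t
    rw [mem_M3, mem_M3]
    constructor
    · rintro ⟨ht, y, hy, he⟩
      refine ⟨ht, y, hy, ?_⟩
      have : (b t).bind (sandE n k) = some y := bindE_some_iff.2 ⟨he, hy⟩
      rw [hInto t] at this
      exact (bindE_some_iff.1 this).1
    · rintro ⟨ht, y, hy, he⟩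
      refine ⟨ht, y, hy, ?_⟩
      have : (a t).bind (sandE n k) = some y := bindE_some_iff.2 ⟨he, hy⟩
      rw [← hInto t] at this
      exact (bindE_some_iff.1 this).1
  · intro t ht
    rcases ht with (ht | ht) | ht
    · exact hOn t (mem_M1.1 ht).1
    · exact hOn t (mem_M2.1 ht).1
    · obtain ⟨_, y, hy, he⟩ := mem_M3.1 ht
      have : (b t).bind (sandE n k) = some y := bindE_some_iff.2 ⟨he, hy⟩
      rw [hInto t] at this
      rw [he, (bindE_some_iff.1 this).1]

theorem fix_singles_mem_NNS {σ : Perm (IS n)} (hσ : σ ∈ AutS n k)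
    (hfix : ∀ x y : Fin n, σ (PEquiv.single x y) = PEquiv.single x y) : σ ∈ NNS n k := by
  rw [mem_NNS]
  intro a
  by_cases hd : Decomp n k a
  · exact Or.inr ⟨Or.inr hd, fix_decomp hσ hfix hd⟩
  · obtain ⟨h1, h2, h3, hval⟩ := agree_M a (σ a) (probe_onA hσ hfix a) (probe_intoA hσ hfix a)
    exact Or.inl ⟨fun hc => hd ((decomp_iff_of_mem_AutS hσ).1 hc), hd, h1, h2, h3, hval⟩

theorem factor (hk : 1 ≤ k) (hkn : k ≤ n) {σ : Perm (IS n)} (hσ : σ ∈ AutS n k) :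
    ∃ G : PA n k × PB n k × PB n k, (Phi n k G)⁻¹ * σ ∈ NNS n k := by
  obtain ⟨g, h₁, h₂, hs⟩ := exists_perms hk hkn hσ
  refine ⟨(g, h₁, h₂), ?_⟩
  have hτ : Phi n k (g, h₁, h₂) ∈ AutS n k := Phi_mem_AutS _
  have hσ' : (Phi n k (g, h₁, h₂))⁻¹ * σ ∈ AutS n k :=
    (AutS n k).mul_mem ((AutS n k).inv_mem hτ) hσ
  apply fix_singles_mem_NNS hσ'
  intro x y
  have hτs : Phi n k (g, h₁, h₂) (PEquiv.single x y)
      = PEquiv.single (bowtie k g h₁ x) (bowtie k g h₂ y) := by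
    rw [Phi_apply, condConj_single]
  rw [Perm.mul_apply, hs x y, ← hτs, Perm.inv_apply_self]
end Sand
namespace Sand
variable {n k : ℕ}

theorem condConj_one : condConj (1 : Perm (Fin n)) (1 : Perm (Fin n)) = 1 := by
  apply Equiv.ext; intro a
  apply PEquiv.ext; intro t
  rw [condConj_apply]
  show (a t).map id = a t
  rw [Option.map_id]; rfl

theorem decomp_single (hk : 1 ≤ k) (hkn : k ≤ n) (x y : Fin n) :
    Decomp n k (PEquiv.single x y) := by
  have h0n : (0 : ℕ) < n := Nat.lt_of_lt_of_le hk hkn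
  refine ⟨PEquiv.single x ⟨0, h0n⟩, PEquiv.single ⟨0, h0n⟩ y, ?_⟩
  exact smul_single_single hk x y

theorem inf_bot (hk : 1 ≤ k) (hkn : k ≤ n) : NNS n k ⊓ (Phi n k).range = ⊥ := by
  rw [Subgroup.eq_bot_iff_forall]
  rintro φ ⟨hN, G, rfl⟩
  obtain ⟨g, h₁, h₂⟩ := G
  have hfix : ∀ x y : Fin n, bowtie k g h₁ x = x ∧ bowtie k g h₂ y = y := by
    intro x y
    have h1 : Phi n k (g, h₁, h₂) (PEquiv.single x y) = PEquiv.single x y :=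
      simrel_of_decomp (hN (PEquiv.single x y)) (Or.inr (decomp_single hk hkn x y))
    rw [Phi_apply, condConj_single] at h1
    exact single_eq_single_iff.1 h1
  have hb1 : bowtie k g h₁ = 1 := Equiv.ext fun x => (hfix x x).1
  have hb2 : bowtie k g h₂ = 1 := Equiv.ext fun x => (hfix x x).2
  rw [Phi_apply]
  show condConj (bowtie k g h₁) (bowtie k g h₂) = 1
  rw [hb1, hb2, condConj_one]

/-- the conjugation action of the parameter group on `𝒩`. -/
noncomputable def act (n k : ℕ) : (PA n k × PB n k × PB n k) →* MulAut ↥(NNS n k) where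
  toFun G :=
    { toFun := fun π => ⟨Phi n k G * ↑π * (Phi n k G)⁻¹, Phi_conj_mem_NNS G π.2⟩
      invFun := fun π => ⟨(Phi n k G)⁻¹ * ↑π * Phi n k G, by
        have := Phi_conj_mem_NNS G⁻¹ π.2
        rwa [map_inv, inv_inv] at this⟩
      left_inv := fun π => Subtype.ext (by group)
      right_inv := fun π => Subtype.ext (by group)
      map_mul' := fun π ρ => Subtype.ext (by
        show Phi n k G * (↑π * ↑ρ) * (Phi n k G)⁻¹
            = (Phi n k G * ↑π * (Phi n k G)⁻¹) * (Phi n k G * ↑ρ * (Phi n k G)⁻¹)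
        group) }
  map_one' := by
    apply MulEquiv.toEquiv_injective
    apply Equiv.ext
    intro π
    exact Subtype.ext (by show Phi n k 1 * ↑π * (Phi n k 1)⁻¹ = ↑π; rw [map_one]; group)
  map_mul' := fun G H => by
    apply MulEquiv.toEquiv_injective
    apply Equiv.ext
    intro π
    refine Subtype.ext ?_
    show Phi n k (G * H) * ↑π * (Phi n k (G * H))⁻¹
        = Phi n k G * (Phi n k H * ↑π * (Phi n k H)⁻¹) * (Phi n k G)⁻¹
    rw [map_mul]
    group

theorem main_all (hk : 1 ≤ k) (hkn : k ≤ n) :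
    Nonempty (((NNS n k) ⋊[act n k] (PA n k × PB n k × PB n k)) ≃* ↥(AutS n k)) := by
  classical
  let ι : ↥(NNS n k) →* ↥(AutS n k) := Subgroup.inclusion NNS_le_AutS
  let Φ' : (PA n k × PB n k × PB n k) →* ↥(AutS n k) :=
    (Phi n k).codRestrict (AutS n k) Phi_mem_AutS
  have hcompat : ∀ G, ι.comp ((act n k) G).toMonoidHom
      = (MulAut.conj (Φ' G)).toMonoidHom.comp ι := by
    intro G
    apply MonoidHom.ext
    intro π
    apply Subtype.ext
    rfl
  let F := SemidirectProduct.lift ι Φ' hcompat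
  have hinj : Function.Injective F := by
    rw [injective_iff_map_eq_one]
    intro x hx
    have hval : (↑(x.left) : Perm (IS n)) * Phi n k x.right = 1 := by
      have := congrArg Subtype.val hx
      exact this
    have hmem : Phi n k x.right ∈ NNS n k ⊓ (Phi n k).range := by
      constructor
      · have hPeq : Phi n k x.right = (↑(x.left) : Perm (IS n))⁻¹ :=
          eq_inv_of_mul_eq_one_right hval
        rw [hPeq]
        exact (NNS n k).inv_mem x.left.2
      · exact ⟨x.right, rfl⟩
    rw [inf_bot hk hkn] at hmem
    have hright : x.right = 1 := Phi_injective (by rw [Subgroup.mem_bot.1 hmem, map_one])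
    have hleft : x.left = 1 := by
      apply Subtype.ext
      have := Subgroup.mem_bot.1 hmem
      rw [this, mul_one] at hval
      exact hval
    have hx' : x = ⟨x.left, x.right⟩ := rfl
    rw [hx', hleft, hright]
    rfl
  have hsurj : Function.Surjective F := by
    intro σ
    obtain ⟨G, hρ⟩ := factor hk hkn σ.2
    refine ⟨⟨⟨Phi n k G * ((Phi n k G)⁻¹ * ↑σ) * (Phi n k G)⁻¹, Phi_conj_mem_NNS G hρ⟩, G⟩, ?_⟩
    apply Subtype.ext
    show (Phi n k G * ((Phi n k G)⁻¹ * ↑σ) * (Phi n k G)⁻¹) * Phi n k G = (↑σ : Perm (IS n))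
    group
  exact ⟨MulEquiv.ofBijective F ⟨hinj, hsurj⟩⟩

end Sand
/-- Main theorem: with `𝒩` the subgroup of `Aut(IS_n, *)` of
automorphisms preserving each `∼`-class and `ℋ` the image of
`S(A) × S(Ā) × S(Ā)` under `(g,h₁,h₂) ↦ τ_(g,h₁,h₂)`, the subgroup `𝒩` is normal
in `Aut(IS_n, *)`, `𝒩 ∩ ℋ` is trivial, `ℋ · 𝒩 = Aut(IS_n, *)`, and
`Aut(IS_n, *) ≅ 𝒩 ⋊ (S(A) × S(Ā) × S(Ā))`. -/
theorem main_theorem (n k : ℕ) (hk : 1 ≤ k) (hkn : k ≤ n) :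
    ∃ Aut NN HH : Subgroup (Equiv.Perm (IS n)),
      (∀ φ : Equiv.Perm (IS n),
        φ ∈ Aut ↔ ∀ x y : IS n, φ (smul n k x y) = smul n k (φ x) (φ y)) ∧
      (∀ π : Equiv.Perm (IS n), π ∈ NN ↔ ∀ a, SimRel n k (π a) a) ∧
      (∃ Φ : (Perm {x : Fin n // (x : ℕ) < k} × Perm {x : Fin n // ¬ (x : ℕ) < k} ×
               Perm {x : Fin n // ¬ (x : ℕ) < k}) →* Equiv.Perm (IS n),
        Function.Injective Φ ∧
        (∀ (g : Perm {x : Fin n // (x : ℕ) < k})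
           (h₁ h₂ : Perm {x : Fin n // ¬ (x : ℕ) < k}) (a : IS n),
             Φ (g, h₁, h₂) a = tauMap k g h₁ h₂ a) ∧
        HH = Φ.range) ∧
      NN ≤ Aut ∧ HH ≤ Aut ∧
      (∀ σ ∈ Aut, ∀ π ∈ NN, σ * π * σ⁻¹ ∈ NN) ∧
      NN ⊓ HH = ⊥ ∧
      (∀ σ ∈ Aut, ∃ τ ∈ HH, ∃ π ∈ NN, σ = τ * π) ∧
      ∃ act : (Perm {x : Fin n // (x : ℕ) < k} × Perm {x : Fin n // ¬ (x : ℕ) < k} ×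
                Perm {x : Fin n // ¬ (x : ℕ) < k}) →* MulAut NN,
        Nonempty ((NN ⋊[act] (Perm {x : Fin n // (x : ℕ) < k} ×
          Perm {x : Fin n // ¬ (x : ℕ) < k} ×
          Perm {x : Fin n // ¬ (x : ℕ) < k})) ≃* Aut) := by

  refine ⟨Sand.AutS n k, Sand.NNS n k, (Sand.Phi n k).range,
    fun φ => Iff.rfl, fun π => Iff.rfl,
    ⟨Sand.Phi n k, Sand.Phi_injective, fun g h₁ h₂ a => rfl, rfl⟩,
    Sand.NNS_le_AutS, ?_, ?_, Sand.inf_bot hk hkn, ?_, Sand.act n k, Sand.main_all hk hkn⟩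
  · rintro φ ⟨G, rfl⟩
    exact Sand.Phi_mem_AutS G
  · intro σ hσ π hπ
    obtain ⟨G, hρ⟩ := Sand.factor hk hkn hσ
    have h1 : ((Sand.Phi n k G)⁻¹ * σ) * π * ((Sand.Phi n k G)⁻¹ * σ)⁻¹ ∈ Sand.NNS n k :=
      mul_mem (mul_mem hρ hπ) (inv_mem hρ)
    have h2 := Sand.Phi_conj_mem_NNS G h1
    have heq : σ * π * σ⁻¹ =
        Sand.Phi n k G * (((Sand.Phi n k G)⁻¹ * σ) * π * ((Sand.Phi n k G)⁻¹ * σ)⁻¹) *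
          (Sand.Phi n k G)⁻¹ := by group
    rw [heq]
    exact h2
  · intro σ hσ
    obtain ⟨G, hρ⟩ := Sand.factor hk hkn hσ
    exact ⟨Sand.Phi n k G, ⟨G, rfl⟩, (Sand.Phi n k G)⁻¹ * σ, hρ, by group⟩
end
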